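/- Let 0 < s < 1 and let x ≥ y ≥ 0 with x > 0. Then (x + y)^s ≤ (x/(x+y))^{1−s}·(x^s + y^s). -/
import Mathlib

/-- Lemma B.1 iii): for `0 < s < 1` and `x ≥ y ≥ 0` with `x > 0`,
`(x + y)^s ≤ (x/(x+y))^{1−s}·(x^s + y^s)`. -/
theorem add_rpow_le (s x y : ℝ) (hs : 0 < s) (hs1 : s < 1)
    (hy : 0 ≤ y) (hxy : y ≤ x) (hx : 0 < x) :
    (x + y) ^ s ≤ (x / (x + y)) ^ (1 - s) * (x ^ s + y ^ s) := by
  have hxy0 : (0:ℝ) < x + y := by linarith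
  have key : y ≤ x ^ (1 - s) * y ^ s := by
    have h1 : y ^ (1 - s) ≤ x ^ (1 - s) :=
      Real.rpow_le_rpow hy hxy (by linarith)
    calc y = y ^ (1 - s) * y ^ s := by
            rw [← Real.rpow_add' hy (by norm_num)]; simp
      _ ≤ x ^ (1 - s) * y ^ s :=
            mul_le_mul_of_nonneg_right h1 (Real.rpow_nonneg hy s)
  have main : x + y ≤ x ^ (1 - s) * (x ^ s + y ^ s) := by
    have hx1 : x ^ (1 - s) * x ^ s = x := by
      rw [← Real.rpow_add hx]; simp
    nlinarith [key]
  rw [Real.div_rpow hx.le hxy0.le, div_mul_eq_mul_div, le_div_iff₀ (Real.rpow_pos_of_pos hxy0 _)]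
  calc (x + y) ^ s * (x + y) ^ (1 - s) = x + y := by
        rw [← Real.rpow_add hxy0]; simp
    _ ≤ x ^ (1 - s) * (x ^ s + y ^ s) := main
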